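/- In any labelled transition system with a sel function on labels, if s is a transition sequence of a parallel composition P | Q obtained by the paper's decomposition (Lemma: parallel traces), then the selected labels satisfy sel(α) = sel(β) ∪ sel(δ), where α is the label trace of s and β, δ are the label traces of the component transition sequences of P and Q. Concretely: for any transition sequence s of P | Q in the session calculus, there exist transition sequences p of P and q of Q and monotone surjective index maps u, v from the index set of s onto those of p and q, such that the i-th state of s is P_{u(i)} | Q_{v(i)} and sel(β) ∪ sel(δ) = sel(α). -/

import Mathlib

/-- Polarised channel names. -/
structure Chan where
  name : ℕ
  pol : Bool
deriving DecidableEq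

/-- The dual end of a polarised channel. -/
def Chan.dual (k : Chan) : Chan := ⟨k.name, !k.pol⟩

/-- Data expressions: values (natural numbers, with `0`/`≠ 0` read as the
booleans) and data variables. -/
inductive Expr where
  | val : ℕ → Expr
  | var : ℕ → Expr
deriving DecidableEq

/-- Substitution of a value for a data variable in an expression. -/
def Expr.subst (e : Expr) (x v : ℕ) : Expr :=
  match e with
  | .val w => .val w
  | .var y => if y = x then .val v else .var y

/-- Evaluation of expressions: `e ⇓ v`. -/
inductive EvalE : Expr → ℕ → Prop where
  | val {v} : EvalE (.val v) v

/-- Processes of the session calculus with responses. -/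
inductive Proc where
  | nil : Proc
  | send : Chan → Expr → Proc → Proc
  | recv : Chan → ℕ → Proc → Proc
  | sel : Chan → ℕ → Proc → Proc
  | bra : Chan → List (ℕ × Proc) → Proc
  | par : Proc → Proc → Proc
  | recp : ℕ → Proc → Proc
  | recn : ℕ → ℕ → Expr → Proc → Proc → Proc
  | pvar : ℕ → List Chan → Proc
  | cond : Expr → Proc → Proc → Proc

/-- Free polarised channel names of a process. -/
def Proc.fn : Proc → Set Chan
  | .nil => ∅
  | .send k _ P => insert k P.fn
  | .recv k _ P => insert k P.fn
  | .sel k _ P => insert k P.fn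
  | .bra k bs => insert k (⋃ p : {x // x ∈ bs}, Proc.fn p.1.2)
  | .par P Q => P.fn ∪ Q.fn
  | .recp _ P => P.fn
  | .recn _ _ _ P Q => P.fn ∪ Q.fn
  | .pvar _ ks => {k | k ∈ ks}
  | .cond _ P Q => P.fn ∪ Q.fn
decreasing_by
  all_goals simp_wf
  all_goals
    first
      | omega
      | (obtain ⟨⟨l2, Q2⟩, hmem⟩ := p
         have := List.sizeOf_lt_of_mem hmem
         simp at this ⊢
         omega)

/-- Free process variables of a process. -/
def Proc.fpv : Proc → Set ℕ
  | .nil => ∅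
  | .send _ _ P => P.fpv
  | .recv _ _ P => P.fpv
  | .sel _ _ P => P.fpv
  | .bra _ bs => ⋃ p : {x // x ∈ bs}, Proc.fpv p.1.2
  | .par P Q => P.fpv ∪ Q.fpv
  | .recp X P => P.fpv \ {X}
  | .recn X _ _ P Q => (P.fpv \ {X}) ∪ Q.fpv
  | .pvar X _ => {X}
  | .cond _ P Q => P.fpv ∪ Q.fpv
decreasing_by
  all_goals simp_wf
  all_goals
    first
      | omega
      | (obtain ⟨⟨l2, Q2⟩, hmem⟩ := p
         have := List.sizeOf_lt_of_mem hmem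
         simp at this ⊢
         omega)

/-- Substitution of a data value for a data variable in a process. -/
def Proc.substV (P : Proc) (x v : ℕ) : Proc :=
  match P with
  | .nil => .nil
  | .send k e Q => .send k (e.subst x v) (Q.substV x v)
  | .recv k y Q => .recv k y (if y = x then Q else Q.substV x v)
  | .sel k l Q => .sel k l (Q.substV x v)
  | .bra k bs => .bra k (bs.attach.map fun ⟨⟨l, Q⟩, h⟩ => (l, Q.substV x v))
  | .par Q R => .par (Q.substV x v) (R.substV x v)
  | .recp X Q => .recp X (Q.substV x v)
  | .recn X i e Q R =>
      .recn X i (e.subst x v) (if i = x then Q else Q.substV x v) (R.substV x v)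
  | .pvar X ks => .pvar X ks
  | .cond e Q R => .cond (e.subst x v) (Q.substV x v) (R.substV x v)
decreasing_by
  all_goals simp_wf
  all_goals (try (have := List.sizeOf_lt_of_mem h; simp at this; omega))
  all_goals omega

/-- Capture-avoiding substitution of a process for a process variable,
`P{Q/X}` (with `X⟨k̃⟩{Q/X} = Q`). -/
def Proc.substP (P : Proc) (X : ℕ) (Q : Proc) : Proc :=
  match P with
  | .nil => .nil
  | .send k e R => .send k e (R.substP X Q)
  | .recv k y R => .recv k y (R.substP X Q)
  | .sel k l R => .sel k l (R.substP X Q)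
  | .bra k bs => .bra k (bs.attach.map fun ⟨⟨l, R⟩, h⟩ => (l, R.substP X Q))
  | .par R S => .par (R.substP X Q) (S.substP X Q)
  | .recp Y R => if Y = X then .recp Y R else .recp Y (R.substP X Q)
  | .recn Y i e R S =>
      .recn Y i e (if Y = X then R else R.substP X Q) (S.substP X Q)
  | .pvar Y ks => if Y = X then Q else .pvar Y ks
  | .cond e R S => .cond e (R.substP X Q) (S.substP X Q)
decreasing_by
  all_goals simp_wf
  all_goals (try (have := List.sizeOf_lt_of_mem h; simp at this; omega))
  all_goals omega

/-- Process transition labels: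
`k!v`, `k?v`, `k⊕l`, `k&l`, `τ`, `τ:l`. -/
inductive PLabel where
  | out : Chan → ℕ → PLabel
  | inp : Chan → ℕ → PLabel
  | sel : Chan → ℕ → PLabel
  | bra : Chan → ℕ → PLabel
  | tau : PLabel
  | tauL : ℕ → PLabel

/-- The subject of a process transition label (`τ` labels have no channel
subject). -/
def PLabel.subj : PLabel → Option Chan
  | .out k _ => some k
  | .inp k _ => some k
  | .sel k _ => some k
  | .bra k _ => some k
  | .tau => none
  | .tauL _ => none

/-- The labelled transition semantics of processes (Figure 1 of the paper),
including the symmetric versions of ParL and Com1/Com2. -/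
inductive PStep : Proc → PLabel → Proc → Prop where
  | out {k e v P} : EvalE e v → k.dual ∉ P.fn →
      PStep (.send k e P) (.out k v) P
  | inp {k x v P} : k.dual ∉ P.fn →
      PStep (.recv k x P) (.inp k v) (P.substV x v)
  | sel {k l P} : k.dual ∉ P.fn →
      PStep (.sel k l P) (.sel k l) P
  | bra {k bs l P} : (l, P) ∈ bs → k.dual ∉ P.fn →
      PStep (.bra k bs) (.bra k l) P
  | parL {P lbl Q P'} : PStep P lbl P' →
      (∀ k, lbl.subj = some k → k.dual ∉ Q.fn) →
      PStep (.par P Q) lbl (.par P' Q)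
  | parR {P lbl Q Q'} : PStep Q lbl Q' →
      (∀ k, lbl.subj = some k → k.dual ∉ P.fn) →
      PStep (.par P Q) lbl (.par P Q')
  | com1 {P Q P' Q' k v} : PStep P (.out k.dual v) P' → PStep Q (.inp k v) Q' →
      PStep (.par P Q) .tau (.par P' Q')
  | com1' {P Q P' Q' k v} : PStep P (.inp k v) P' → PStep Q (.out k.dual v) Q' →
      PStep (.par P Q) .tau (.par P' Q')
  | com2 {P Q P' Q' k l} : PStep P (.sel k.dual l) P' → PStep Q (.bra k l) Q' →
      PStep (.par P Q) (.tauL l) (.par P' Q')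
  | com2' {P Q P' Q' k l} : PStep P (.bra k l) P' → PStep Q (.sel k.dual l) Q' →
      PStep (.par P Q) (.tauL l) (.par P' Q')
  | recp {X P lbl Q} : PStep (P.substP X (.recp X P)) lbl Q →
      PStep (.recp X P) lbl Q
  | prec0 {X i e P Q lbl R} : EvalE e 0 → PStep Q lbl R →
      PStep (.recn X i e P Q) lbl R
  | precN {X i e n P Q lbl R} : EvalE e (n + 1) →
      PStep ((P.substV i n).substP X (.recn X i (.val n) P Q)) lbl R →
      PStep (.recn X i e P Q) lbl R
  | condT {e v P Q lbl P'} : EvalE e v → v ≠ 0 → PStep P lbl P' →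
      PStep (.cond e P Q) lbl P'
  | condF {e P Q lbl Q'} : EvalE e 0 → PStep Q lbl Q' →
      PStep (.cond e P Q) lbl Q'

/-- Session types with responses. -/
inductive RType where
  | end_ : RType
  | send : RType → RType
  | recv : RType → RType
  | branch : List (ℕ × Set ℕ × RType) → RType
  | select : List (ℕ × Set ℕ × RType) → RType

/-- A session typing environment: a partial map from polarised channel names
to session types with responses. -/
def SEnv := Chan → Option RType

/-- The singleton environment `k : T`. -/
def SEnv.single (k : Chan) (T : RType) : SEnv :=
  fun k' => if k' = k then some T else none

/-- Union `Δ, Δ'` of environments (intended for disjoint domains). -/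
def SEnv.union (Δ Δ' : SEnv) : SEnv :=
  fun k => (Δ k).orElse (fun _ => Δ' k)

/-- Disjointness of environment domains. -/
def SEnv.Disj (Δ Δ' : SEnv) : Prop := ∀ k, Δ k = none ∨ Δ' k = none

/-- The domain of an environment. -/
def SEnv.dom (Δ : SEnv) : Set Chan := {k | Δ k ≠ none}

/-- An environment is completed when every type in it is `end`. -/
def SEnv.Completed (Δ : SEnv) : Prop :=
  ∀ k T, Δ k = some T → T = RType.end_

/-- Information recorded for a process variable by the liveness typing
system: `(A, I, Δ)` (accumulated selections, invariant, session environment)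
for general recursion, or `(L, Δ)` for primitive recursion. -/
inductive PVInfo where
  | gen : Set ℕ → Set ℕ → SEnv → PVInfo
  | prim : Set ℕ → SEnv → PVInfo

/-- Process variable environments `Γ`. -/
def PEnv := ℕ → Option PVInfo

/-- `Γ + l`: add the selected label `l` to every accumulator in `Γ`. -/
def PEnv.addAcc (Γ : PEnv) (l : ℕ) : PEnv :=
  fun X => match Γ X with
    | some (.gen A I Δ) => some (.gen (A ∪ {l}) I Δ)
    | o => o

/-- `Γ, X : t` (extension/update of a process variable environment). -/
def PEnv.update (Γ : PEnv) (X : ℕ) (t : PVInfo) : PEnv :=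
  fun Y => if Y = X then some t else Γ Y

/-- The empty process variable environment. -/
def PEnv.empty : PEnv := fun _ => none

/-- The liveness typing system `Γ; L ⊢ P ▹ Δ` (Figure 4 of the paper). -/
inductive Typed : PEnv → Set ℕ → Proc → SEnv → Prop where
  | inact {Γ Δ} : SEnv.Completed Δ → Typed Γ ∅ .nil Δ
  | out {Γ L k e P Δ T} : Δ k = none →
      Typed Γ L P (SEnv.union Δ (SEnv.single k T)) →
      Typed Γ L (.send k e P) (SEnv.union Δ (SEnv.single k (.send T)))
  | inp {Γ L k x P Δ T} : Δ k = none →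
      Typed Γ L P (SEnv.union Δ (SEnv.single k T)) →
      Typed Γ L (.recv k x P) (SEnv.union Δ (SEnv.single k (.recv T)))
  | bra {Γ : PEnv} {L : Set ℕ} {k : Chan} {bs : List (ℕ × Proc)}
      {ts : List (ℕ × Set ℕ × RType)} {Δ : SEnv} : Δ k = none → bs.length = ts.length →
      (∀ (i : ℕ) (l : ℕ) (P : Proc) (l' : ℕ) (L' : Set ℕ) (T : RType),
        bs[i]? = some (l, P) → ts[i]? = some (l', L', T) → l = l') →
      (∀ (i : ℕ) (l : ℕ) (P : Proc) (l' : ℕ) (L' : Set ℕ) (T : RType),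
        bs[i]? = some (l, P) → ts[i]? = some (l', L', T) →
        Typed (Γ.addAcc l) ((L \ {l}) ∪ L') P (SEnv.union Δ (SEnv.single k T))) →
      Typed Γ L (.bra k bs) (SEnv.union Δ (SEnv.single k (.branch ts)))
  | sel {Γ L k l P Δ ts Ll T} : Δ k = none → (l, Ll, T) ∈ ts →
      Typed (Γ.addAcc l) ((L \ {l}) ∪ Ll) P (SEnv.union Δ (SEnv.single k T)) →
      Typed Γ L (.sel k l P) (SEnv.union Δ (SEnv.single k (.select ts)))
  | par {Γ L₁ L₂ P Q Δ₁ Δ₂} : SEnv.Disj Δ₁ Δ₂ →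
      Typed Γ L₁ P Δ₁ → Typed Γ L₂ Q Δ₂ →
      Typed Γ (L₁ ∪ L₂) (.par P Q) (SEnv.union Δ₁ Δ₂)
  | varG {Γ X A I Δ L ks} : Γ X = some (.gen A I Δ) → L ⊆ I → I ⊆ A →
      SEnv.dom Δ = {k | k ∈ ks} →
      Typed Γ L (.pvar X ks) Δ
  | varP {Γ X L' Δ L ks} : Γ X = some (.prim L' Δ) → L ⊆ L' →
      SEnv.dom Δ = {k | k ∈ ks} →
      Typed Γ L (.pvar X ks) Δ
  | recp {Γ X I P Δ L} : Typed (Γ.update X (.gen ∅ I Δ)) I P Δ → L ⊆ I →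
      Typed Γ L (.recp X P) Δ
  | recn {Γ X i e P Q Δ L L'} :
      Typed (Γ.update X (.prim L' Δ)) L' P Δ →
      Typed Γ L' Q Δ → L ⊆ L' →
      Typed Γ L (.recn X i e P Q) Δ
  | cond {Γ L e P Q Δ} : Typed Γ L P Δ → Typed Γ L Q Δ →
      Typed Γ L (.cond e P Q) Δ

/-- The labels selected by a process transition label:
`sel(k&l) = sel(k⊕l) = sel(τ:l) = {l}`, and `∅` otherwise. -/
def PLabel.selSet : PLabel → Set ℕ
  | .bra _ l => {l}
  | .sel _ l => {l}
  | .tauL l => {l}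
  | _ => ∅

/-- A finite or infinite transition sequence of processes: `len` transitions
(`len = ⊤` for an infinite sequence), states indexed by `i ≤ len` and labels
by `i < len`. -/
structure TSeq where
  len : ℕ∞
  st : ℕ → Proc
  lab : ℕ → PLabel
  step : ∀ i : ℕ, (i : ℕ∞) < len → PStep (st i) (lab i) (st (i + 1))

/-- `sel(α)` of the label trace of a transition sequence. -/
def TSeq.selTrace (s : TSeq) : Set ℕ :=
  {l | ∃ i : ℕ, (i : ℕ∞) < s.len ∧ l ∈ (s.lab i).selSet}

namespace PTD

def optSel (o : Option PLabel) : Set ℕ := o.elim ∅ PLabel.selSet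

def rank (o : Option PLabel) : ℕ := o.elim 0 (fun _ => 1)

structure Data where
  A : Proc
  B : Proc
  u : ℕ
  v : ℕ

structure SD (s : TSeq) (i : ℕ) (A B : Proc) where
  A' : Proc
  B' : Proc
  oA : Option PLabel
  oB : Option PLabel
  hst : s.st (i+1) = .par A' B'
  hA : ∀ l, oA = some l → PStep A l A'
  hA0 : oA = none → A' = A
  hB : ∀ l, oB = some l → PStep B l B'
  hB0 : oB = none → B' = B
  hsel : optSel oA ∪ optSel oB = (s.lab i).selSet

lemma par_inv {A B : Proc} {lbl : PLabel} {R : Proc} (h : PStep (.par A B) lbl R) :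
    ∃ (A' B' : Proc) (oA oB : Option PLabel), R = .par A' B' ∧
      (∀ l, oA = some l → PStep A l A') ∧ (oA = none → A' = A) ∧
      (∀ l, oB = some l → PStep B l B') ∧ (oB = none → B' = B) ∧
      optSel oA ∪ optSel oB = lbl.selSet := by
  cases h with
  | @parL _ _ _ P' h hk =>
    refine ⟨P', B, some lbl, none, rfl, ?_, ?_, ?_, ?_, ?_⟩
    · intro l hl; obtain rfl := Option.some.inj hl; exact h
    · intro hl; exact nomatch hl
    · intro l hl; exact nomatch hl
    · intro _; rfl
    · simp [optSel]
  | @parR _ _ _ Q' h hk =>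
    refine ⟨A, Q', none, some lbl, rfl, ?_, ?_, ?_, ?_, ?_⟩
    · intro l hl; exact nomatch hl
    · intro _; rfl
    · intro l hl; obtain rfl := Option.some.inj hl; exact h
    · intro hl; exact nomatch hl
    · simp [optSel]
  | @com1 _ _ P' Q' k v h1 h2 =>
    refine ⟨P', Q', some (.out k.dual v), some (.inp k v), rfl, ?_, ?_, ?_, ?_, ?_⟩
    · intro l hl; obtain rfl := Option.some.inj hl; exact h1
    · intro hl; exact nomatch hl
    · intro l hl; obtain rfl := Option.some.inj hl; exact h2
    · intro hl; exact nomatch hl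
    · simp [optSel, PLabel.selSet]
  | @com1' _ _ P' Q' k v h1 h2 =>
    refine ⟨P', Q', some (.inp k v), some (.out k.dual v), rfl, ?_, ?_, ?_, ?_, ?_⟩
    · intro l hl; obtain rfl := Option.some.inj hl; exact h1
    · intro hl; exact nomatch hl
    · intro l hl; obtain rfl := Option.some.inj hl; exact h2
    · intro hl; exact nomatch hl
    · simp [optSel, PLabel.selSet]
  | @com2 _ _ P' Q' k l h1 h2 =>
    refine ⟨P', Q', some (.sel k.dual l), some (.bra k l), rfl, ?_, ?_, ?_, ?_, ?_⟩
    · intro l' hl; obtain rfl := Option.some.inj hl; exact h1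
    · intro hl; exact nomatch hl
    · intro l' hl; obtain rfl := Option.some.inj hl; exact h2
    · intro hl; exact nomatch hl
    · simp [optSel, PLabel.selSet]
  | @com2' _ _ P' Q' k l h1 h2 =>
    refine ⟨P', Q', some (.bra k l), some (.sel k.dual l), rfl, ?_, ?_, ?_, ?_, ?_⟩
    · intro l' hl; obtain rfl := Option.some.inj hl; exact h1
    · intro hl; exact nomatch hl
    · intro l' hl; obtain rfl := Option.some.inj hl; exact h2
    · intro hl; exact nomatch hl
    · simp [optSel, PLabel.selSet]

lemma mkSD {s : TSeq} {i : ℕ} {A B : Proc} (hi : (i : ℕ∞) < s.len)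
    (hst : s.st i = .par A B) : Nonempty (SD s i A B) := by
  have h := s.step i hi
  rw [hst] at h
  obtain ⟨A', B', oA, oB, h1, h2, h3, h4, h5, h6⟩ := par_inv h
  exact ⟨⟨A', B', oA, oB, h1, h2, h3, h4, h5, h6⟩⟩

open Classical in
noncomputable def nxt (s : TSeq) (i : ℕ) (d : Data) : Data × Option PLabel × Option PLabel :=
  if h : (i : ℕ∞) < s.len ∧ Nonempty (SD s i d.A d.B) then
    ⟨⟨(Classical.choice h.2).A', (Classical.choice h.2).B',
      d.u + rank (Classical.choice h.2).oA, d.v + rank (Classical.choice h.2).oB⟩,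
      (Classical.choice h.2).oA, (Classical.choice h.2).oB⟩
  else ⟨d, none, none⟩

noncomputable def St (s : TSeq) (P Q : Proc) : ℕ → Data
  | 0 => ⟨P, Q, 0, 0⟩
  | i + 1 => (nxt s i (St s P Q i)).1

noncomputable def Lb (s : TSeq) (P Q : Proc) (i : ℕ) : Option PLabel × Option PLabel :=
  (nxt s i (St s P Q i)).2

variable (s : TSeq) (P Q : Proc)

lemma step_data (i : ℕ) (hi : (i : ℕ∞) < s.len)
    (hst : s.st i = .par (St s P Q i).A (St s P Q i).B) :
    ∃ sd : SD s i (St s P Q i).A (St s P Q i).B,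
      St s P Q (i+1) = ⟨sd.A', sd.B', (St s P Q i).u + rank sd.oA, (St s P Q i).v + rank sd.oB⟩ ∧
      Lb s P Q i = (sd.oA, sd.oB) := by
  have h : (i : ℕ∞) < s.len ∧ Nonempty (SD s i (St s P Q i).A (St s P Q i).B) :=
    ⟨hi, mkSD hi hst⟩
  refine ⟨Classical.choice h.2, ?_, ?_⟩
  · show (nxt s i (St s P Q i)).1 = _
    unfold nxt
    rw [dif_pos h]
  · show (nxt s i (St s P Q i)).2 = _
    unfold nxt
    rw [dif_pos h]

lemma frozen (i : ℕ) (hi : ¬ (i : ℕ∞) < s.len) :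
    St s P Q (i+1) = St s P Q i ∧ Lb s P Q i = (none, none) := by
  have h : ¬ ((i : ℕ∞) < s.len ∧ Nonempty (SD s i (St s P Q i).A (St s P Q i).B)) :=
    fun h => hi h.1
  constructor
  · show (nxt s i (St s P Q i)).1 = _
    unfold nxt
    rw [dif_neg h]
  · show (nxt s i (St s P Q i)).2 = _
    unfold nxt
    rw [dif_neg h]

lemma inv (h0 : s.st 0 = .par P Q) :
    ∀ i : ℕ, (i : ℕ∞) ≤ s.len → s.st i = .par (St s P Q i).A (St s P Q i).B := by
  intro i
  induction i with
  | zero => intro _; simpa [St] using h0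
  | succ n ih =>
    intro h
    have hn : (n : ℕ∞) < s.len :=
      lt_of_lt_of_le (by exact_mod_cast Nat.lt_succ_self n) h
    obtain ⟨sd, hSt, _⟩ := step_data s P Q n hn (ih hn.le)
    rw [hSt]
    exact sd.hst

def comp (b : Bool) (d : Data) : Proc := if b then d.A else d.B
def cnt (b : Bool) (d : Data) : ℕ := if b then d.u else d.v
def pick (b : Bool) (x : Option PLabel × Option PLabel) : Option PLabel := if b then x.1 else x.2

noncomputable def uu (b : Bool) (i : ℕ) : ℕ := cnt b (St s P Q i)
noncomputable def cc (b : Bool) (i : ℕ) : Proc := comp b (St s P Q i)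
noncomputable def lf (b : Bool) (i : ℕ) : Option PLabel := pick b (Lb s P Q i)

noncomputable def tlen (b : Bool) : ℕ∞ := ⨆ i, (uu s P Q b i : ℕ∞)

open Classical in
noncomputable def tst (b : Bool) (j : ℕ) : Proc :=
  if h : ∃ i, uu s P Q b i = j then cc s P Q b h.choose else .nil

open Classical in
noncomputable def tlab (b : Bool) (j : ℕ) : PLabel :=
  if h : ∃ i, uu s P Q b i = j ∧ uu s P Q b (i+1) = j + 1 then
    (lf s P Q b h.choose).getD .tau else .tau

lemma uu0 (b : Bool) : uu s P Q b 0 = 0 := by cases b <;> simp [uu, cnt, St]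

lemma step_cases (h0 : s.st 0 = .par P Q) (b : Bool) (i : ℕ) :
    (lf s P Q b i = none ∧ cc s P Q b (i+1) = cc s P Q b i ∧
      uu s P Q b (i+1) = uu s P Q b i) ∨
    (∃ l, lf s P Q b i = some l ∧ (i : ℕ∞) < s.len ∧
      PStep (cc s P Q b i) l (cc s P Q b (i+1)) ∧
      uu s P Q b (i+1) = uu s P Q b i + 1) := by
  by_cases hi : (i : ℕ∞) < s.len
  · obtain ⟨sd, hSt, hLb⟩ := step_data s P Q i hi (inv s P Q h0 i hi.le)
    cases b with
    | false =>
      cases hoB : sd.oB with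
      | none =>
        left
        refine ⟨?_, ?_, ?_⟩
        · simp [lf, pick, hLb, hoB]
        · simp [cc, comp, hSt, sd.hB0 hoB]
        · simp [uu, cnt, hSt, hoB, rank]
      | some l =>
        right
        refine ⟨l, by simp [lf, pick, hLb, hoB], hi, ?_, ?_⟩
        · have := sd.hB l hoB
          simpa [cc, comp, hSt] using this
        · simp [uu, cnt, hSt, hoB, rank]
    | true =>
      cases hoA : sd.oA with
      | none =>
        left
        refine ⟨?_, ?_, ?_⟩
        · simp [lf, pick, hLb, hoA]
        · simp [cc, comp, hSt, sd.hA0 hoA]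
        · simp [uu, cnt, hSt, hoA, rank]
      | some l =>
        right
        refine ⟨l, by simp [lf, pick, hLb, hoA], hi, ?_, ?_⟩
        · have := sd.hA l hoA
          simpa [cc, comp, hSt] using this
        · simp [uu, cnt, hSt, hoA, rank]
  · obtain ⟨h1, h2⟩ := frozen s P Q i hi
    left
    refine ⟨?_, ?_, ?_⟩
    · simp [lf, pick, h2]
    · simp [cc, h1]
    · simp [uu, h1]

lemma sel_eq (h0 : s.st 0 = .par P Q) (i : ℕ) (hi : (i : ℕ∞) < s.len) :
    optSel (Lb s P Q i).1 ∪ optSel (Lb s P Q i).2 = (s.lab i).selSet := by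
  obtain ⟨sd, _, hLb⟩ := step_data s P Q i hi (inv s P Q h0 i hi.le)
  rw [hLb]; exact sd.hsel

lemma uu_mono (h0 : s.st 0 = .par P Q) (b : Bool) : Monotone (uu s P Q b) := by
  apply monotone_nat_of_le_succ
  intro i
  rcases step_cases s P Q h0 b i with ⟨_, _, h⟩ | ⟨l, _, _, _, h⟩ <;> omega

lemma cc_const (h0 : s.st 0 = .par P Q) (b : Bool) :
    ∀ d i : ℕ, uu s P Q b i = uu s P Q b (i+d) → cc s P Q b i = cc s P Q b (i+d) := by
  intro d
  induction d with
  | zero => intro i _; rfl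
  | succ d ih =>
    intro i h
    have h1 : uu s P Q b i ≤ uu s P Q b (i+d) := uu_mono s P Q h0 b (Nat.le_add_right i d)
    have h3 : i + (d+1) = (i + d) + 1 := rfl
    rw [h3] at h ⊢
    rcases step_cases s P Q h0 b (i+d) with ⟨_, hc, hu⟩ | ⟨_, _, _, _, hu⟩
    · rw [hc]; exact ih i (by omega)
    · omega

lemma cc_eq (h0 : s.st 0 = .par P Q) (b : Bool) {i j : ℕ} (hij : i ≤ j)
    (h : uu s P Q b i = uu s P Q b j) : cc s P Q b i = cc s P Q b j := by
  obtain ⟨d, rfl⟩ := Nat.exists_eq_add_of_le hij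
  exact cc_const s P Q h0 b d i h

lemma tst_eq (h0 : s.st 0 = .par P Q) (b : Bool) (i : ℕ) :
    tst s P Q b (uu s P Q b i) = cc s P Q b i := by
  have h : ∃ i', uu s P Q b i' = uu s P Q b i := ⟨i, rfl⟩
  rw [tst, dif_pos h]
  have hs := h.choose_spec
  rcases le_total h.choose i with hle | hle
  · exact cc_eq s P Q h0 b hle hs
  · exact (cc_eq s P Q h0 b hle hs.symm).symm

lemma ivt (h0 : s.st 0 = .par P Q) (b : Bool) (j : ℕ) :
    ∀ m, j + 1 ≤ uu s P Q b m →
      ∃ i, uu s P Q b i = j ∧ uu s P Q b (i+1) = j + 1 := by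
  intro m
  induction m with
  | zero => intro h; rw [uu0] at h; omega
  | succ m ih =>
    intro h
    by_cases hm : j + 1 ≤ uu s P Q b m
    · exact ih hm
    · have hstep : uu s P Q b (m+1) ≤ uu s P Q b m + 1 := by
        rcases step_cases s P Q h0 b m with ⟨_, _, h'⟩ | ⟨_, _, _, _, h'⟩ <;> omega
      exact ⟨m, by omega, by omega⟩

lemma inc_unique (h0 : s.st 0 = .par P Q) (b : Bool) {i i' j : ℕ}
    (h1 : uu s P Q b i = j) (h2 : uu s P Q b (i+1) = j+1)
    (h1' : uu s P Q b i' = j) (h2' : uu s P Q b (i'+1) = j+1) : i = i' := by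
  rcases lt_trichotomy i i' with h | h | h
  · have := uu_mono s P Q h0 b (show i+1 ≤ i' by omega); omega
  · exact h
  · have := uu_mono s P Q h0 b (show i'+1 ≤ i by omega); omega

lemma tlab_eq (h0 : s.st 0 = .par P Q) (b : Bool) {i j : ℕ}
    (h1 : uu s P Q b i = j) (h2 : uu s P Q b (i+1) = j+1) :
    ∃ l, lf s P Q b i = some l ∧ tlab s P Q b j = l ∧ (i : ℕ∞) < s.len ∧
      PStep (cc s P Q b i) l (cc s P Q b (i+1)) := by
  have hE : ∃ i, uu s P Q b i = j ∧ uu s P Q b (i+1) = j + 1 := ⟨i, h1, h2⟩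
  obtain ⟨e1, e2⟩ := hE.choose_spec
  have hieq : hE.choose = i := inc_unique s P Q h0 b e1 e2 h1 h2
  rcases step_cases s P Q h0 b i with ⟨_, _, hu⟩ | ⟨l, hl, hlen, hstep, _⟩
  · omega
  · refine ⟨l, hl, ?_, hlen, hstep⟩
    rw [tlab, dif_pos hE, hieq, hl]
    rfl

lemma tstep (h0 : s.st 0 = .par P Q) (b : Bool) :
    ∀ j : ℕ, (j : ℕ∞) < tlen s P Q b →
      PStep (tst s P Q b j) (tlab s P Q b j) (tst s P Q b (j+1)) := by
  intro j hj
  rw [tlen, lt_iSup_iff] at hj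
  obtain ⟨m, hm⟩ := hj
  have hm' : j < uu s P Q b m := by exact_mod_cast hm
  obtain ⟨i, h1, h2⟩ := ivt s P Q h0 b j m hm'
  obtain ⟨l, _, hlab, _, hstep⟩ := tlab_eq s P Q h0 b h1 h2
  have e1 : tst s P Q b j = cc s P Q b i := by rw [← h1]; exact tst_eq s P Q h0 b i
  have e2 : tst s P Q b (j+1) = cc s P Q b (i+1) := by rw [← h2]; exact tst_eq s P Q h0 b (i+1)
  rw [e1, e2, hlab]
  exact hstep

noncomputable def tseq (h0 : s.st 0 = .par P Q) (b : Bool) : TSeq :=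
  ⟨tlen s P Q b, tst s P Q b, tlab s P Q b, tstep s P Q h0 b⟩

lemma St_freeze (n : ℕ) (hl : s.len = (n : ℕ∞)) :
    ∀ i, n ≤ i → St s P Q i = St s P Q n := by
  intro i
  induction i with
  | zero => intro h; have : n = 0 := Nat.le_zero.mp h; rw [this]
  | succ m ih =>
    intro h
    rcases Nat.lt_or_ge m n with hmn | hmn
    · have : n = m + 1 := by omega
      rw [this]
    · have hfe : ¬ ((m : ℕ∞) < s.len) := by
        rw [hl]
        exact not_lt.mpr (by exact_mod_cast hmn)
      rw [(frozen s P Q m hfe).1]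
      exact ih hmn

lemma surj (h0 : s.st 0 = .par P Q) (b : Bool) :
    ∀ j : ℕ, (j : ℕ∞) ≤ tlen s P Q b →
      ∃ i : ℕ, (i : ℕ∞) ≤ s.len ∧ uu s P Q b i = j := by
  intro j hj
  have hex : ∃ i, uu s P Q b i = j := by
    cases j with
    | zero => exact ⟨0, uu0 s P Q b⟩
    | succ j' =>
      have hm : ∃ m, j' + 1 ≤ uu s P Q b m := by
        by_contra hc
        push_neg at hc
        have h1 : tlen s P Q b ≤ (j' : ℕ∞) :=
          iSup_le fun i => by exact_mod_cast Nat.lt_succ_iff.mp (hc i)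
        have h2 : ((j' + 1 : ℕ) : ℕ∞) ≤ (j' : ℕ∞) := le_trans hj h1
        have h3 : j' + 1 ≤ j' := by exact_mod_cast h2
        omega
      obtain ⟨m, hm⟩ := hm
      obtain ⟨i, _, h2⟩ := ivt s P Q h0 b j' m hm
      exact ⟨i+1, h2⟩
  obtain ⟨i, hi⟩ := hex
  rcases eq_or_ne s.len ⊤ with hl | hl
  · exact ⟨i, by simp [hl], hi⟩
  · obtain ⟨n, hn⟩ := WithTop.ne_top_iff_exists.mp hl
    rcases le_or_gt i n with hin | hin
    · exact ⟨i, by rw [← hn]; exact Nat.cast_le.mpr hin, hi⟩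
    · refine ⟨n, le_of_eq hn, ?_⟩
      rw [← hi]
      show cnt b (St s P Q n) = cnt b (St s P Q i)
      rw [St_freeze s P Q n hn.symm i hin.le]

lemma sub_sel (h0 : s.st 0 = .par P Q) (b : Bool) (j : ℕ)
    (hj : (j : ℕ∞) < tlen s P Q b) :
    ∃ i : ℕ, (i : ℕ∞) < s.len ∧ (tlab s P Q b j).selSet ⊆ (s.lab i).selSet := by
  rw [tlen, lt_iSup_iff] at hj
  obtain ⟨m, hm⟩ := hj
  have hm' : j < uu s P Q b m := by exact_mod_cast hm
  obtain ⟨i, h1, h2⟩ := ivt s P Q h0 b j m hm'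
  obtain ⟨l, hlf, hlab, hlen, _⟩ := tlab_eq s P Q h0 b h1 h2
  refine ⟨i, hlen, ?_⟩
  rw [hlab, ← sel_eq s P Q h0 i hlen]
  cases b with
  | true =>
    have : (Lb s P Q i).1 = some l := hlf
    intro x hx
    exact Or.inl (by rw [this]; exact hx)
  | false =>
    have : (Lb s P Q i).2 = some l := hlf
    intro x hx
    exact Or.inr (by rw [this]; exact hx)

lemma mem_sel (h0 : s.st 0 = .par P Q) (b : Bool) (i : ℕ) {l : ℕ}
    (hx : l ∈ optSel (lf s P Q b i)) :
    ∃ j : ℕ, (j : ℕ∞) < tlen s P Q b ∧ l ∈ (tlab s P Q b j).selSet := by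
  cases hlf : lf s P Q b i with
  | none => rw [hlf] at hx; simp [optSel] at hx
  | some lA =>
    rw [hlf] at hx
    rcases step_cases s P Q h0 b i with ⟨h', _, _⟩ | ⟨l', hl', hlen, _, hu⟩
    · rw [hlf] at h'; cases h'
    · obtain ⟨l'', hlf'', hlab, _, _⟩ :=
        tlab_eq s P Q h0 b (rfl : uu s P Q b i = uu s P Q b i) hu
      refine ⟨uu s P Q b i, ?_, ?_⟩
      · refine lt_of_lt_of_le ?_ (le_iSup (fun m => ((uu s P Q b m : ℕ∞))) (i+1))
        exact_mod_cast (by omega : uu s P Q b i < uu s P Q b (i+1))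
      · rw [hlab]
        rw [hlf] at hlf''
        injection hlf'' with hE
        rw [← hE]
        simpa [optSel] using hx

end PTD
/-- Decomposition of transition sequences of a parallel composition: any
transition sequence `s` of `P | Q` arises as a merge of transition sequences
`p` of `P` and `q` of `Q` along monotone surjective index maps `u, v`, the
`i`-th state of `s` being `P_{u(i)} | Q_{v(i)}`, and the selected labels
satisfy `sel(β) ∪ sel(δ) = sel(α)`. -/
theorem parallel_trace_decomposition (s : TSeq) (P Q : Proc)
    (h0 : s.st 0 = .par P Q) :
    ∃ (p q : TSeq) (u v : ℕ → ℕ),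
      p.st 0 = P ∧ q.st 0 = Q ∧
      Monotone u ∧ Monotone v ∧
      (∀ i : ℕ, (i : ℕ∞) ≤ s.len → (u i : ℕ∞) ≤ p.len ∧ (v i : ℕ∞) ≤ q.len) ∧
      (∀ j : ℕ, (j : ℕ∞) ≤ p.len → ∃ i : ℕ, (i : ℕ∞) ≤ s.len ∧ u i = j) ∧
      (∀ j : ℕ, (j : ℕ∞) ≤ q.len → ∃ i : ℕ, (i : ℕ∞) ≤ s.len ∧ v i = j) ∧
      (∀ i : ℕ, (i : ℕ∞) ≤ s.len → s.st i = .par (p.st (u i)) (q.st (v i))) ∧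
      p.selTrace ∪ q.selTrace = s.selTrace := by
  classical
  refine ⟨PTD.tseq s P Q h0 true, PTD.tseq s P Q h0 false,
    PTD.uu s P Q true, PTD.uu s P Q false, ?_, ?_, ?_, ?_, ?_, ?_, ?_, ?_, ?_⟩
  · have h := PTD.tst_eq s P Q h0 true 0
    rw [PTD.uu0] at h
    simpa [PTD.tseq, PTD.cc, PTD.comp, PTD.St] using h
  · have h := PTD.tst_eq s P Q h0 false 0
    rw [PTD.uu0] at h
    simpa [PTD.tseq, PTD.cc, PTD.comp, PTD.St] using h
  · exact PTD.uu_mono s P Q h0 true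
  · exact PTD.uu_mono s P Q h0 false
  · intro i _
    exact ⟨le_iSup (fun m => ((PTD.uu s P Q true m : ℕ∞))) i,
      le_iSup (fun m => ((PTD.uu s P Q false m : ℕ∞))) i⟩
  · exact PTD.surj s P Q h0 true
  · exact PTD.surj s P Q h0 false
  · intro i hi
    have h := PTD.inv s P Q h0 i hi
    rw [h]
    have e1 : (PTD.tseq s P Q h0 true).st (PTD.uu s P Q true i) = (PTD.St s P Q i).A :=
      PTD.tst_eq s P Q h0 true i
    have e2 : (PTD.tseq s P Q h0 false).st (PTD.uu s P Q false i) = (PTD.St s P Q i).B :=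
      PTD.tst_eq s P Q h0 false i
    rw [e1, e2]
  · ext l
    simp only [TSeq.selTrace, PTD.tseq, Set.mem_union, Set.mem_setOf_eq]
    constructor
    · rintro (⟨j, hj, hl⟩ | ⟨j, hj, hl⟩)
      · obtain ⟨i, hi, hsub⟩ := PTD.sub_sel s P Q h0 true j hj
        exact ⟨i, hi, hsub hl⟩
      · obtain ⟨i, hi, hsub⟩ := PTD.sub_sel s P Q h0 false j hj
        exact ⟨i, hi, hsub hl⟩
    · rintro ⟨i, hi, hl⟩
      rw [← PTD.sel_eq s P Q h0 i hi] at hl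
      rcases hl with hl | hl
      · exact Or.inl (PTD.mem_sel s P Q h0 true i hl)
      · exact Or.inr (PTD.mem_sel s P Q h0 false i hl)
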